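/- For any function F : (ℕ → Bool) → ℕ → Bool, the set of F-autoreducible elements of Cantor space, if measurable, has measure zero; and if it has the Baire property, it is meager. -/

import Mathlib

open MeasureTheory Set Filter

/-- The fair-coin (product Bernoulli(1/2)) measure on Cantor space, realized as the
pushforward of Lebesgue measure on [0,1) under the binary-digit map. -/
noncomputable def coin : Measure (ℕ → Bool) :=
  Measure.map (fun r n => decide (⌊r * 2 ^ (n + 1)⌋ % 2 = 1)) (volume.restrict (Set.Ico (0:ℝ) 1))

/-- Flip the i-th bit of x. -/
def bitFlip (i : ℕ) (x : ℕ → Bool) : ℕ → Bool := Function.update x i (!x i)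

/-- The basic cylinder of sequences extending the finite binary string s. -/
def cyl (s : List Bool) : Set (ℕ → Bool) := {x | ∀ k, k < s.length → x k = s.getD k false}

/-- x with its n-th bit deleted (later bits shifted left). -/
def del (n : ℕ) (x : ℕ → Bool) : ℕ → Bool := fun k => if k < n then x k else x (k + 1)

/-- x and y differ in only finitely many coordinates. -/
def FinDiff (x y : ℕ → Bool) : Prop := {n | x n ≠ y n}.Finite

/-- x is autoreducible via the oracle machine F. -/
def Autoreducible (F : (ℕ → Bool) → ℕ → Bool) (x : ℕ → Bool) : Prop :=
  ∀ n, F (del n x) n = x n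


section AuxAutoreducible
open Topology Metric ENNReal NNReal

lemma del_bitFlip (n : ℕ) (x : ℕ → Bool) : del n (bitFlip n x) = del n x := by
  funext k
  unfold del bitFlip
  split
  · exact Function.update_of_ne (by omega) _ _
  · exact Function.update_of_ne (by omega) _ _

lemma bitFlip_apply_lt {n k : ℕ} (x : ℕ → Bool) (h : k ≠ n) : bitFlip n x k = x k :=
  Function.update_of_ne h _ _

lemma not_auto_flip {F : (ℕ → Bool) → ℕ → Bool} {x : ℕ → Bool} (n : ℕ)
    (hx : Autoreducible F x) : ¬ Autoreducible F (bitFlip n x) := by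
  intro h
  have h1 := hx n
  have h2 := h n
  rw [del_bitFlip] at h2
  rw [h1] at h2
  have : bitFlip n x n = !x n := Function.update_self _ _ _
  rw [this] at h2
  cases hb : x n <;> rw [hb] at h2 <;> simp at h2

lemma bitFlip_involutive (n : ℕ) : Function.Involutive (bitFlip n) := by
  intro x
  funext k
  by_cases hk : k = n
  · subst hk
    unfold bitFlip
    simp [Function.update_self]
  · unfold bitFlip
    rw [Function.update_of_ne hk, Function.update_of_ne hk]

lemma bitFlip_continuous (n : ℕ) : Continuous (bitFlip n) := by
  apply continuous_pi
  intro k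
  by_cases hk : k = n
  · subst hk
    unfold bitFlip
    simp only [Function.update_self]
    exact Continuous.comp (continuous_of_discreteTopology (f := Bool.not)) (continuous_apply k)
  · unfold bitFlip
    simp only [Function.update_of_ne hk]
    exact continuous_apply k

lemma bitFlip_isOpenMap (n : ℕ) : IsOpenMap (bitFlip n) := by
  intro u hu
  rw [Set.image_eq_preimage_of_inverse (bitFlip_involutive n) (bitFlip_involutive n)]
  exact hu.preimage (bitFlip_continuous n)



lemma isMeagre_union {X : Type*} [TopologicalSpace X] {s t : Set X}
    (hs : IsMeagre s) (ht : IsMeagre t) : IsMeagre (s ∪ t) := by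
  rw [IsMeagre, compl_union]; exact inter_mem hs ht

-- main baire lemma skeleton
lemma meagre_of_flip (s : Set (ℕ → Bool)) (hkey : ∀ n x, x ∈ s → bitFlip n x ∉ s)
    (h : BaireMeasurableSet s) : IsMeagre s := by
  obtain ⟨u, huo, hsu⟩ := h.residualEq_isOpen
  have hres : {y | y ∈ s ↔ y ∈ u} ∈ residual _ := Filter.eventuallyEq_set.1 hsu
  have hdiff : IsMeagre (u \ s) := by
    rw [IsMeagre]
    exact mem_of_superset hres (fun y hy => by simp only [mem_setOf_eq] at hy; simp only [mem_compl_iff, mem_diff]; tauto)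
  have hdiff2 : IsMeagre (s \ u) := by
    rw [IsMeagre]
    exact mem_of_superset hres (fun y hy => by simp only [mem_setOf_eq] at hy; simp only [mem_compl_iff, mem_diff]; tauto)
  rcases eq_empty_or_nonempty u with hu | ⟨x, hx⟩
  · subst hu
    exact IsMeagre.mono (fun y (hy : y ∈ s) => (⟨hy, notMem_empty y⟩ : y ∈ s \ ∅)) hdiff2
  · exfalso
    -- find a cylinder inside u
    obtain ⟨I, v, hv, hIu⟩ := isOpen_pi_iff.1 huo x hx
    set n := I.sup id + 1 with hn
    set C : Set (ℕ → Bool) := {y | ∀ k < n, y k = x k} with hC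
    have hCx : x ∈ C := fun k _ => rfl
    have hCu : C ⊆ u := by
      intro y hy
      apply hIu
      intro i hi
      have : y i = x i := hy i (by
        have : i ≤ I.sup id := Finset.le_sup (f := id) hi
        omega)
      rw [this]
      exact (hv i hi).2
    have hCopen : IsOpen C := by
      have : C = ⋂ k ∈ Finset.range n, (fun y : ℕ → Bool => y k) ⁻¹' {x k} := by
        ext y
        simp [hC, Finset.mem_range]
      rw [this]
      exact isOpen_biInter_finset fun k _ =>
        (isOpen_discrete _).preimage (continuous_apply k)
    -- C \ s is meager
    have hM1 : IsMeagre (C \ s) := IsMeagre.mono (fun y (hy : y ∈ C \ s) => (⟨hCu hy.1, hy.2⟩ : y ∈ u \ s)) hdiff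
    have hM2 : IsMeagre (bitFlip n ⁻¹' (C \ s)) :=
      hM1.preimage_of_isOpenMap (bitFlip_continuous n) (bitFlip_isOpenMap n)
    have hCsub : C ⊆ (C \ s) ∪ (bitFlip n ⁻¹' (C \ s)) := by
      intro y hy
      by_cases hys : y ∈ s
      · right
        refine ⟨fun k hk => ?_, hkey n y hys⟩
        rw [bitFlip_apply_lt y (by omega)]
        exact hy k hk
      · exact Or.inl ⟨hy, hys⟩
    have hCmeagre : IsMeagre C := (isMeagre_union hM1 hM2).mono hCsub
    have hdense : Dense Cᶜ := dense_of_mem_residual hCmeagre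
    obtain ⟨y, hy1, hy2⟩ := hdense.inter_open_nonempty C hCopen ⟨x, hCx⟩
    exact hy2 hy1


-- constancy of low digits on a dyadic interval
lemma floor_constant {n m : ℕ} (hm : m < n) (k : ℤ) (t : ℝ)
    (h1 : (k:ℝ)/2^n ≤ t) (h2 : t < (k:ℝ)/2^n + 1/2^n) :
    ⌊t * 2^(m+1)⌋ = k / 2^(n-m-1) := by
  set E : ℤ := 2^(n-m-1) with hE
  have hEpos : (0:ℤ) < E := pow_pos (by norm_num) _
  have hdm := Int.mul_ediv_add_emod k E
  have hm0 : 0 ≤ k % E := Int.emod_nonneg k (ne_of_gt hEpos)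
  have hm1 : k % E < E := Int.emod_lt_of_pos k hEpos
  have hql : E * (k / E) ≤ k := by omega
  have hqu : k < E * (k / E) + E := by omega
  have hER : ((E:ℝ)) = 2^(n-m-1) := by push_cast [hE]; ring
  have hpow : (2:ℝ)^n = 2^(m+1) * (E:ℝ) := by
    rw [hER, ← pow_add]
    congr 1
    omega
  have hERpos : (0:ℝ) < (E:ℝ) := by positivity
  have h2mpos : (0:ℝ) < (2:ℝ)^(m+1) := by positivity
  have h2npos : (0:ℝ) < (2:ℝ)^n := by positivity
  -- real versions of the integer bounds
  have hqlR : (E:ℝ) * ((k / E : ℤ):ℝ) ≤ (k:ℝ) := by exact_mod_cast hql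
  have hqu1 : k + 1 ≤ E * (k / E) + E := by omega
  have hquR : (k:ℝ) + 1 ≤ (E:ℝ) * ((k / E : ℤ):ℝ) + (E:ℝ) := by exact_mod_cast hqu1
  have h1' : (k:ℝ) ≤ t * 2^n := by
    rw [div_le_iff₀ h2npos] at h1; linarith
  have h2' : t * 2^n < (k:ℝ) + 1 := by
    rw [← lt_div_iff₀ h2npos] at *
    calc t < (k:ℝ)/2^n + 1/2^n := h2
    _ = ((k:ℝ)+1)/2^n := by ring
  rw [Int.floor_eq_iff]
  constructor
  · -- ↑(k/E) ≤ t * 2^(m+1)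
    rw [← mul_le_mul_iff_of_pos_right hERpos]
    calc ((k / E : ℤ):ℝ) * E ≤ (k:ℝ) := by linarith
    _ ≤ t * 2^n := h1'
    _ = t * 2^(m+1) * E := by rw [hpow]; ring
  · rw [← mul_lt_mul_iff_of_pos_right hERpos]
    calc t * 2^(m+1) * (E:ℝ) = t * 2^n := by rw [hpow]; ring
    _ < (k:ℝ) + 1 := h2'
    _ ≤ (((k/E : ℤ):ℝ) + 1) * E := by linarith

lemma floor_at_n {n : ℕ} (k : ℤ) (r : ℝ)
    (h1 : (k:ℝ)/2^n ≤ r) (h2 : r < (k:ℝ)/2^n + 1/2^(n+1)) :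
    ⌊r * 2^(n+1)⌋ = 2*k := by
  have h2n : (0:ℝ) < (2:ℝ)^(n+1) := by positivity
  have hc : ((k:ℝ)/2^n) * 2^(n+1) = 2*k := by
    rw [pow_succ]
    field_simp
  rw [Int.floor_eq_iff]
  constructor
  · push_cast
    calc ((2:ℝ)*k) = ((k:ℝ)/2^n) * 2^(n+1) := hc.symm
    _ ≤ r * 2^(n+1) := by nlinarith
  · push_cast
    calc r * 2^(n+1) < ((k:ℝ)/2^n + 1/2^(n+1)) * 2^(n+1) := by nlinarith
    _ = 2*k + 1 := by rw [add_mul, hc]; field_simp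

lemma floor_above {n m : ℕ} (hm : n < m) (r : ℝ) :
    ⌊(r + 1/2^(n+1)) * 2^(m+1)⌋ = ⌊r * 2^(m+1)⌋ + 2^(m-n) := by
  have he : (r + 1/2^(n+1)) * 2^(m+1) = r * 2^(m+1) + ((2^(m-n) : ℤ) : ℝ) := by
    push_cast
    have : (2:ℝ)^(m+1) = 2^(n+1) * 2^(m-n) := by
      rw [← pow_add]; congr 1; omega
    field_simp [this]
    have h3 : (2:ℝ)^n * 2^(m-n) = 2^m := by rw [← pow_add]; congr 1; omega
    linear_combination (-2:ℝ) * h3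
  rw [he, Int.floor_add_intCast]

lemma flip_eq (n : ℕ) (k : ℤ) (r : ℝ)
    (h1 : (k:ℝ)/2^n ≤ r) (h2 : r < (k:ℝ)/2^n + 1/2^(n+1)) :
    (fun m => decide (⌊(r + 1/2^(n+1)) * 2^(m+1)⌋ % 2 = 1))
      = bitFlip n (fun m => decide (⌊r * 2^(m+1)⌋ % 2 = 1)) := by
  have hhalf : (1:ℝ)/2^(n+1) + 1/2^(n+1) = 1/2^n := by
    rw [pow_succ]; field_simp; ring
  have hpos : (0:ℝ) < 1/2^(n+1) := by positivity
  funext m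
  rcases lt_trichotomy m n with h | h | h
  · rw [bitFlip_apply_lt _ (by omega : m ≠ n)]
    have e1 := floor_constant h k r h1 (by linarith)
    have e2 := floor_constant h k (r + 1/2^(n+1)) (by linarith) (by linarith)
    rw [e1, e2]
  · subst h
    have ha := floor_at_n k r h1 h2
    have hb : ⌊(r + 1/2^(m+1)) * 2^(m+1)⌋ = 2*k + 1 := by
      have he : (r + 1/2^(m+1)) * 2^(m+1) = r * 2^(m+1) + 1 := by
        field_simp
      rw [he, Int.floor_add_one, ha]
    unfold bitFlip
    rw [Function.update_self]
    show _ = !(decide (⌊r * 2^(m+1)⌋ % 2 = 1))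
    rw [ha, hb]
    have e0 : (2*k) % 2 = 0 := by omega
    have e1 : (2*k+1) % 2 = 1 := by omega
    rw [e0, e1]
    simp
  · rw [bitFlip_apply_lt _ (by omega : m ≠ n)]
    show decide ((⌊(r + 1/2^(n+1)) * 2^(m+1)⌋) % 2 = 1) = decide (⌊r * 2^(m+1)⌋ % 2 = 1)
    rw [floor_above h r]
    have h2p : (2:ℤ)^(m-n) = 2 * 2^(m-n-1) := by
      rw [← pow_succ']
      congr 1
      omega
    simp only [decide_eq_decide]
    omega


lemma null_of_flip (s : Set ℝ) (hs : MeasurableSet s)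
    (hkey : ∀ (n : ℕ) (k : ℤ) (r : ℝ), (k:ℝ)/2^n ≤ r → r < (k:ℝ)/2^n + 1/2^(n+1) →
      r ∈ s → r + 1/2^(n+1) ∉ s) :
    volume s = 0 := by
  by_contra h0
  have hne : volume.restrict s ≠ 0 := by rwa [Ne, Measure.restrict_eq_zero]
  haveI : (ae (volume.restrict s)).NeBot := ae_neBot.2 hne
  have hd := Besicovitch.ae_tendsto_measure_inter_div volume s
  obtain ⟨x, hxs, hx⟩ := ((ae_restrict_mem hs).and hd).exists
  have hfrac : (15/16 : ℝ≥0∞) = ENNReal.ofReal (15/16 : ℝ) := by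
    rw [ENNReal.ofReal_div_of_pos (by norm_num)]
    norm_num
  have hev : ∀ᶠ t in 𝓝[>] (0:ℝ),
      (15/16 : ℝ≥0∞) < volume (s ∩ closedBall x t) / volume (closedBall x t) :=
    hx.eventually (eventually_gt_nhds (by
      rw [hfrac]
      exact ENNReal.ofReal_lt_one.2 (by norm_num)))
  obtain ⟨w, hw, hsub⟩ := mem_nhdsGT_iff_exists_Ioo_subset.1 hev
  obtain ⟨n, hn⟩ := exists_pow_lt_of_lt_one (hw : (0:ℝ) < w) (by norm_num : (1/2:ℝ) < 1)
  set t : ℝ := (1/2)^n with htdef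
  have ht0 : 0 < t := by positivity
  have hrat := hsub ⟨ht0, hn⟩
  -- dyadic setup
  set k : ℤ := ⌊x * 2^n⌋ with hk
  set c : ℝ := (k:ℝ)/2^n with hc
  set δ : ℝ := 1/2^(n+1) with hδ
  have h2n : (0:ℝ) < 2^n := by positivity
  have htδ : t = δ + δ := by
    rw [htdef, hδ, pow_succ, div_pow, one_pow]
    field_simp
    ring
  have hδ0 : 0 < δ := by positivity
  have hxc : c ≤ x ∧ x < c + t := by
    constructor
    · rw [hc, div_le_iff₀ h2n]
      exact Int.floor_le _
    · rw [hc]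
      have := Int.lt_floor_add_one (x * 2^n)
      have ht2 : t = 1/2^n := by rw [htdef, div_pow, one_pow]
      rw [ht2]
      rw [← lt_div_iff₀ h2n] at this
      calc x < ((k:ℝ) + 1)/2^n := this
      _ = (k:ℝ)/2^n + 1/2^n := by ring
  set I : Set ℝ := Ico c (c + t) with hI
  set L : Set ℝ := Ico c (c + δ) with hL
  set R : Set ℝ := Ico (c + δ) (c + t) with hR
  have hIcb : I ⊆ closedBall x t := by
    intro y hy
    rw [mem_closedBall, Real.dist_eq, abs_le]
    obtain ⟨hy1, hy2⟩ := hy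
    constructor <;> [skip; skip] <;> nlinarith [hxc.1, hxc.2]
  have hcbvol : volume (closedBall x t) = ENNReal.ofReal (2*t) := Real.volume_closedBall x t
  have hfin : volume (closedBall x t) ≠ ⊤ := by rw [hcbvol]; exact ENNReal.ofReal_ne_top
  have hnz : volume (closedBall x t) ≠ 0 := by
    rw [hcbvol]
    simp only [Ne, ENNReal.ofReal_eq_zero, not_le]
    linarith
  -- from the ratio bound
  have hsb : (15/16 : ℝ≥0∞) * volume (closedBall x t) < volume (s ∩ closedBall x t) :=
    (ENNReal.lt_div_iff_mul_lt (Or.inl hnz) (Or.inl hfin)).1 hrat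
  have hsb' : ENNReal.ofReal (15/16 * (2*t)) < volume (s ∩ closedBall x t) := by
    rw [ENNReal.ofReal_mul (by norm_num), ← hfrac]
    rwa [hcbvol] at hsb
  have hcd : volume (closedBall x t \ s) < ENNReal.ofReal (1/16 * (2*t)) := by
    by_contra hge
    push_neg at hge
    have hsum := measure_diff_add_inter (μ := volume) (closedBall x t) hs
    rw [inter_comm] at hsb'
    have : ENNReal.ofReal (1/16 * (2*t)) + ENNReal.ofReal (15/16 * (2*t))
        < volume (closedBall x t \ s) + volume (closedBall x t ∩ s) :=
      ENNReal.add_lt_add_of_le_of_lt ENNReal.ofReal_ne_top hge hsb'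
    rw [hsum, hcbvol, ← ENNReal.ofReal_add (by positivity) (by positivity)] at this
    have h2 : (1/16 * (2*t) + 15/16 * (2*t)) = 2*t := by ring
    rw [h2] at this
    exact lt_irrefl _ this
  have hdiffsub : volume (I \ s) < ENNReal.ofReal (1/16 * (2*t)) :=
    lt_of_le_of_lt (measure_mono (diff_subset_diff_left hIcb)) hcd
  -- translation
  have himg : (fun y => y + δ) '' (s ∩ L) ⊆ R \ s := by
    intro z hz
    obtain ⟨r, ⟨hrs, hr1, hr2⟩, hze⟩ := hz
    rw [show (fun y => y + δ) r = r + δ from rfl] at hze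
    subst hze
    refine ⟨⟨by linarith, by rw [htδ] at *; linarith⟩, ?_⟩
    exact hkey n k r (by rwa [← hc]) (by rw [← hc, ← hδ]; exact hr2) hrs
  have himgvol : volume ((fun y => y + δ) '' (s ∩ L)) = volume (s ∩ L) := by
    have : (fun y : ℝ => y + δ) '' (s ∩ L) = (fun y : ℝ => y + (-δ)) ⁻¹' (s ∩ L) := by
      ext z
      simp only [mem_image, mem_preimage]
      constructor
      · rintro ⟨r, hr, rfl⟩
        simpa using hr
      · intro hz
        exact ⟨z + (-δ), hz, by ring⟩
    rw [this, measure_preimage_add_right]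
  have h1 : volume L ≤ volume (s ∩ L) + volume (I \ s) := by
    have hsub2 : L ⊆ (s ∩ L) ∪ (I \ s) := by
      intro y hy
      by_cases hys : y ∈ s
      · exact Or.inl ⟨hys, hy⟩
      · refine Or.inr ⟨⟨hy.1, ?_⟩, hys⟩
        have := hy.2
        linarith [htδ, hδ0]
    exact (measure_mono hsub2).trans (measure_union_le _ _)
  have h2 : volume (s ∩ L) ≤ volume (R \ s) := by
    rw [← himgvol]
    exact measure_mono himg
  have h3 : volume (R \ s) ≤ volume (I \ s) := by
    apply measure_mono
    apply diff_subset_diff_left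
    intro y hy
    exact ⟨by linarith [hy.1, hδ0], hy.2⟩
  have hLvol : volume L = ENNReal.ofReal δ := by
    rw [hL, Real.volume_Ico]
    congr 1
    ring
  have hchain : ENNReal.ofReal δ < ENNReal.ofReal (1/16 * (2*t)) + ENNReal.ofReal (1/16 * (2*t)) := by
    calc ENNReal.ofReal δ = volume L := hLvol.symm
    _ ≤ volume (s ∩ L) + volume (I \ s) := h1
    _ ≤ volume (I \ s) + volume (I \ s) := by
        exact add_le_add (h2.trans h3) le_rfl
    _ < _ := ENNReal.add_lt_add hdiffsub hdiffsub
  rw [← ENNReal.ofReal_add (by positivity) (by positivity)] at hchain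
  rw [ENNReal.ofReal_lt_ofReal_iff (by positivity)] at hchain
  -- 1/16*(2t) + 1/16*(2t) = t/4 = δ/2 < δ
  have : t = 2*δ := by linarith [htδ]
  nlinarith [hδ0]


end AuxAutoreducible

theorem autoreducibles_null_and_meagre (F : (ℕ → Bool) → ℕ → Bool) :
    (MeasurableSet {x | Autoreducible F x} → coin {x | Autoreducible F x} = 0) ∧
    (BaireMeasurableSet {x | Autoreducible F x} → IsMeagre {x | Autoreducible F x}) := by
  have hkey : ∀ (n : ℕ) x, x ∈ {x | Autoreducible F x} → bitFlip n x ∉ {x | Autoreducible F x} :=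
    fun n x hx => not_auto_flip n hx
  constructor
  · intro hA
    have hg : Measurable (fun (r : ℝ) (n : ℕ) => decide (⌊r * 2 ^ (n + 1)⌋ % 2 = 1)) :=
      measurable_pi_lambda _ fun n =>
        (measurable_from_top (f := fun z : ℤ => decide (z % 2 = 1))).comp
          (Int.measurable_floor.comp (measurable_id.mul_const _))
    have hcoin : coin {x | Autoreducible F x}
        = volume ((fun (r : ℝ) (n : ℕ) => decide (⌊r * 2 ^ (n + 1)⌋ % 2 = 1)) ⁻¹'
            {x | Autoreducible F x} ∩ Set.Ico (0:ℝ) 1) := by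
      rw [coin, Measure.map_apply hg hA, Measure.restrict_apply (hg hA)]
    rw [hcoin]
    apply null_of_flip _ ((hg hA).inter measurableSet_Ico)
    intro n k r hr1 hr2 hrs hmem
    have hflip := flip_eq n k r hr1 hr2
    have hauto : Autoreducible F (fun m => decide (⌊r * 2 ^ (m + 1)⌋ % 2 = 1)) := hrs.1
    have hmem' : Autoreducible F (fun m => decide (⌊(r + 1/2^(n+1)) * 2 ^ (m + 1)⌋ % 2 = 1)) :=
      hmem.1
    rw [hflip] at hmem'
    exact not_auto_flip n hauto hmem'
  · intro hB
    exact meagre_of_flip _ hkey hB
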